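/- Let A and B be n×n complex positive definite matrices with Tr[A] = Tr[B] = 1 (density matrices), and let p ∈ [1/2, 1]. Then Tr[T_{1/2}(A|B)] ≤ Tr[T_p(A|B)]. -/

import Mathlib

open Matrix ComplexOrder

/-- Real power of a (Hermitian) complex matrix via the continuous functional calculus,
corresponding to `Matrix.PosDef.rpow` on positive definite matrices. -/
noncomputable def mrpow {n : Type*} [Fintype n] [DecidableEq n]
    (A : Matrix n n ℂ) (r : ℝ) : Matrix n n ℂ :=
  cfc (fun t : ℝ => t ^ r) A

/-- The Loewner order: `loe X Y` means `Y - X` is positive semidefinite. -/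
def loe {n : Type*} [Fintype n] (X Y : Matrix n n ℂ) : Prop :=
  (Y - X).PosSemidef

/-- `A ♮ᵣ B = A^{1/2} (A^{-1/2} B A^{-1/2})^r A^{1/2}`; for `r ∈ [0,1]` this is the
weighted geometric mean `A #ᵣ B`. -/
noncomputable def natu {n : Type*} [Fintype n] [DecidableEq n]
    (A B : Matrix n n ℂ) (r : ℝ) : Matrix n n ℂ :=
  mrpow A (1 / 2) * mrpow (mrpow A (-(1 / 2)) * B * mrpow A (-(1 / 2))) r * mrpow A (1 / 2)

/-- The Tsallis relative operator entropy `T_p(A|B) = (A #_p B - A) / p`. -/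
noncomputable def TsallisEntropy {n : Type*} [Fintype n] [DecidableEq n]
    (A B : Matrix n n ℂ) (p : ℝ) : Matrix n n ℂ :=
  (1 / p : ℝ) • (natu A B p - A)

section Aux

variable {n : Type*} [Fintype n] [DecidableEq n]

private lemma spec_pos' {A : Matrix n n ℂ} (hA : A.PosDef) : ∀ x ∈ spectrum ℝ A, 0 < x := by
  intro x hx
  rw [Matrix.IsHermitian.spectrum_real_eq_range_eigenvalues hA.1] at hx
  obtain ⟨i, rfl⟩ := hx
  exact hA.eigenvalues_pos i

private lemma contOn' (f : ℝ → ℝ) (A : Matrix n n ℂ) : ContinuousOn f (spectrum ℝ A) :=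
  (Matrix.finite_real_spectrum (A := A)).continuousOn f

private lemma mrpow_herm' (A : Matrix n n ℂ) (r : ℝ) : (mrpow A r).IsHermitian :=
  cfc_predicate _ A

private lemma mrpow_mul_mrpow' {A : Matrix n n ℂ} (hA : A.PosDef) (r s : ℝ) :
    mrpow A r * mrpow A s = mrpow A (r + s) := by
  unfold mrpow
  rw [← cfc_mul _ _ A (contOn' _ A) (contOn' _ A)]
  exact cfc_congr fun x hx => (Real.rpow_add (spec_pos' hA x hx) r s).symm

private lemma half_mul_half' {A : Matrix n n ℂ} (hA : A.PosDef) :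
    mrpow A (1 / 2) * mrpow A (1 / 2) = A := by
  rw [mrpow_mul_mrpow' hA]
  unfold mrpow
  rw [show (1 / 2 + 1 / 2 : ℝ) = 1 by norm_num]
  calc cfc (fun t : ℝ => t ^ (1 : ℝ)) A = cfc (id : ℝ → ℝ) A :=
        cfc_congr fun x _ => Real.rpow_one x
    _ = A := cfc_id ℝ A hA.1.isSelfAdjoint

private lemma neg_half_mul_half' {A : Matrix n n ℂ} (hA : A.PosDef) :
    mrpow A (-(1 / 2)) * mrpow A (1 / 2) = 1 := by
  rw [mrpow_mul_mrpow' hA]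
  unfold mrpow
  rw [show (-(1 / 2) + 1 / 2 : ℝ) = 0 by norm_num]
  calc cfc (fun t : ℝ => t ^ (0 : ℝ)) A = cfc (fun _ : ℝ => (1 : ℝ)) A :=
        cfc_congr fun x _ => Real.rpow_zero x
    _ = 1 := cfc_const_one ℝ A hA.1.isSelfAdjoint

private lemma posdef_conj' {M B : Matrix n n ℂ} (hM : M.IsHermitian) (hMu : IsUnit M)
    (hB : B.PosDef) : (M * B * M).PosDef := by
  have h1 : M * B * M = Mᴴ * B * M := by rw [hM.eq]
  rw [h1]
  have hinj : Function.Injective (M.mulVec) := mulVec_injective_iff_isUnit.mpr hMu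
  exact hB.conjTranspose_mul_mul_same hinj

private lemma cfc_psd' {A : Matrix n n ℂ} (hA : A.IsHermitian) {f : ℝ → ℝ}
    (hf : ∀ x ∈ spectrum ℝ A, 0 ≤ f x) : (cfc f A).PosSemidef := by
  rw [hA.cfc_eq]
  unfold Matrix.IsHermitian.cfc
  rw [Unitary.conjStarAlgAut_apply, star_eq_conjTranspose]
  refine PosSemidef.mul_mul_conjTranspose_same ?_ _
  refine posSemidef_diagonal_iff.mpr fun i => ?_
  exact RCLike.ofReal_nonneg.mpr (hf _ (hA.eigenvalues_mem_spectrum_real i))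

private lemma trace_re_nonneg' {X : Matrix n n ℂ} (hX : X.PosSemidef) : 0 ≤ X.trace.re := by
  have h : X.trace.re = ∑ i, (X i i).re := by
    simp [Matrix.trace, Matrix.diag, Complex.re_sum]
  rw [h]
  refine Finset.sum_nonneg fun i _ => ?_
  have h2 := hX.re_dotProduct_nonneg (Pi.single i 1)
  simpa [Matrix.mulVec_single, dotProduct, Pi.single_apply, Finset.sum_ite_eq,
    RCLike.re_to_complex] using h2

private lemma scalar_ineq' {t : ℝ} (ht : 0 < t) {p : ℝ} (hp0 : 1 / 2 ≤ p) :
    (1 / (1 / 2 : ℝ)) * (t ^ (1 / 2 : ℝ) - 1) ≤ (1 / p) * (t ^ p - 1) := by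
  have hp : 0 < p := lt_of_lt_of_le (by norm_num) hp0
  have hy : (0 : ℝ) ≤ t ^ (1 / 2 : ℝ) := Real.rpow_nonneg ht.le _
  have hs : (-1 : ℝ) ≤ t ^ (1 / 2 : ℝ) - 1 := by linarith
  have h2p : (1 : ℝ) ≤ 2 * p := by linarith
  have hb := one_add_mul_self_le_rpow_one_add hs h2p
  have hkey : (1 + (t ^ (1 / 2 : ℝ) - 1)) ^ (2 * p) = t ^ p := by
    rw [show (1 + (t ^ (1 / 2 : ℝ) - 1)) = t ^ (1 / 2 : ℝ) by ring,
      ← Real.rpow_mul ht.le]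
    ring_nf
  rw [hkey] at hb
  have h1 : 2 * p * (t ^ (1 / 2 : ℝ) - 1) ≤ t ^ p - 1 := by linarith
  have h2 : (1 / (1 / 2 : ℝ)) * (t ^ (1 / 2 : ℝ) - 1)
      = (1 / p) * (2 * p * (t ^ (1 / 2 : ℝ) - 1)) := by
    field_simp
  rw [h2]
  exact mul_le_mul_of_nonneg_left h1 (by positivity)

private lemma tsallis_eq' {A B : Matrix n n ℂ} (hA : A.PosDef)
    (hC : (mrpow A (-(1 / 2)) * B * mrpow A (-(1 / 2))).IsHermitian) (q : ℝ) :
    TsallisEntropy A B q =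
      mrpow A (1 / 2) *
        cfc (fun t : ℝ => (1 / q) * (t ^ q - 1))
          (mrpow A (-(1 / 2)) * B * mrpow A (-(1 / 2))) * mrpow A (1 / 2) := by
  set C := mrpow A (-(1 / 2)) * B * mrpow A (-(1 / 2)) with hCdef
  set sA := mrpow A (1 / 2) with hsAdef
  have hss : sA * sA = A := half_mul_half' hA
  have h1 : cfc (fun t : ℝ => t ^ q - 1) C = mrpow C q - 1 := by
    rw [cfc_sub _ _ C (contOn' _ C) (contOn' _ C), cfc_const_one ℝ C hC.isSelfAdjoint]
    rfl
  have h2 : cfc (fun t : ℝ => (1 / q) * (t ^ q - 1)) C = (1 / q : ℝ) • (mrpow C q - 1) := by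
    rw [← h1, ← cfc_smul ((1 / q) : ℝ) _ C (contOn' _ C)]
    simp only [smul_eq_mul]
  rw [h2]
  show (1 / q : ℝ) • (natu A B q - A) = _
  have h3 : natu A B q - A = sA * (mrpow C q - 1) * sA := by
    show sA * mrpow C q * sA - A = _
    rw [mul_sub, sub_mul, mul_one, hss]
  rw [h3, mul_smul_comm, smul_mul_assoc]

end Aux

theorem stmt18 {n : Type*} [Fintype n] [DecidableEq n] {A B : Matrix n n ℂ}
    (hA : A.PosDef) (hB : B.PosDef)
    (hTrA : (A.trace).re = 1) (hTrB : (B.trace).re = 1)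
    {p : ℝ} (hp0 : 1 / 2 ≤ p) (hp1 : p ≤ 1) :
    ((TsallisEntropy A B (1 / 2)).trace).re ≤ ((TsallisEntropy A B p).trace).re := by
  set C := mrpow A (-(1 / 2)) * B * mrpow A (-(1 / 2)) with hCdef
  set sA := mrpow A (1 / 2) with hsAdef
  have hMu : IsUnit (mrpow A (-(1 / 2))) :=
    ⟨⟨_, _, neg_half_mul_half' hA, mul_eq_one_comm.mp (neg_half_mul_half' hA)⟩, rfl⟩
  have hCpd : C.PosDef := posdef_conj' (mrpow_herm' A _) hMu hB
  have hCh : C.IsHermitian := hCpd.1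
  rw [tsallis_eq' hA hCh p, tsallis_eq' hA hCh (1 / 2)]
  set fp : ℝ → ℝ := fun t => (1 / p) * (t ^ p - 1) with hfp
  set fh : ℝ → ℝ := fun t => (1 / (1 / 2 : ℝ)) * (t ^ (1 / 2 : ℝ) - 1) with hfh
  have hdiff : (sA * cfc fp C * sA - sA * cfc fh C * sA).PosSemidef := by
    have he : sA * cfc fp C * sA - sA * cfc fh C * sA
        = sA * cfc (fun t : ℝ => fp t - fh t) C * sA := by
      rw [cfc_sub _ _ C (contOn' _ C) (contOn' _ C), mul_sub, sub_mul]
    rw [he]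
    have hpsd : (cfc (fun t : ℝ => fp t - fh t) C).PosSemidef :=
      cfc_psd' hCh fun x hx => sub_nonneg.mpr (scalar_ineq' (spec_pos' hCpd x hx) hp0)
    have h4 := hpsd.mul_mul_conjTranspose_same sA
    rwa [(mrpow_herm' A (1 / 2)).eq] at h4
  have h5 := trace_re_nonneg' hdiff
  rw [trace_sub, Complex.sub_re] at h5
  linarith
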